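/- Let 1 < q < p < r, A > 0, B ≤ 0, C > 0, and Φ(t) = (t^p/p)A - (t^q/q)C - (t^r/r)B for t > 0. Then Φ has a unique critical point t₂ > 0 in (0,∞), and Φ''(t₂) > 0 (so t₂ is a local minimum). -/

import Mathlib

open Real Filter Set

private lemma hasDerivPhi {p q r A B C t : ℝ} (hp : p ≠ 0) (hq : q ≠ 0) (hr : r ≠ 0)
    (ht : 0 < t) :
    HasDerivAt (fun t : ℝ => t ^ p / p * A - t ^ q / q * C - t ^ r / r * B)
      (t ^ (p-1) * A - t ^ (q-1) * C - t ^ (r-1) * B) t := by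
  have h1 := ((Real.hasDerivAt_rpow_const (x := t) (p := p) (Or.inl ht.ne')).div_const p).mul_const A
  have h2 := ((Real.hasDerivAt_rpow_const (x := t) (p := q) (Or.inl ht.ne')).div_const q).mul_const C
  have h3 := ((Real.hasDerivAt_rpow_const (x := t) (p := r) (Or.inl ht.ne')).div_const r).mul_const B
  have h := (h1.sub h2).sub h3
  refine h.congr_deriv ?_
  simp only [mul_div_cancel_left₀ _ hp, mul_div_cancel_left₀ _ hq, mul_div_cancel_left₀ _ hr]

private lemma hasDeriv2Phi {p q r A B C t : ℝ} (ht : 0 < t) :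
    HasDerivAt (fun t : ℝ => t ^ (p-1) * A - t ^ (q-1) * C - t ^ (r-1) * B)
      ((p-1) * t ^ (p-1-1) * A - (q-1) * t ^ (q-1-1) * C - (r-1) * t ^ (r-1-1) * B) t := by
  have h1 := (Real.hasDerivAt_rpow_const (x := t) (p := p-1) (Or.inl ht.ne')).mul_const A
  have h2 := (Real.hasDerivAt_rpow_const (x := t) (p := q-1) (Or.inl ht.ne')).mul_const C
  have h3 := (Real.hasDerivAt_rpow_const (x := t) (p := r-1) (Or.inl ht.ne')).mul_const B
  exact (h1.sub h2).sub h3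

theorem stmt_16 (p q r A B C : ℝ) (hq : 1 < q) (hqp : q < p) (hpr : p < r)
    (hA : 0 < A) (hB : B ≤ 0) (hC : 0 < C) :
    let Φ : ℝ → ℝ := fun t => t ^ p / p * A - t ^ q / q * C - t ^ r / r * B
    ∃ t₂ : ℝ, 0 < t₂ ∧ deriv Φ t₂ = 0 ∧
      (∀ t : ℝ, 0 < t → deriv Φ t = 0 → t = t₂) ∧
      0 < deriv (deriv Φ) t₂ := by
  intro Φ
  have hp1 : (1:ℝ) < p := lt_trans hq hqp
  have hr1 : (1:ℝ) < r := lt_trans hp1 hpr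
  have hp0 : p ≠ 0 := by positivity
  have hq0 : q ≠ 0 := by positivity
  have hr0 : r ≠ 0 := by positivity
  have hpq : 0 < p - q := by linarith
  have hrq : 0 < r - q := by linarith
  -- g
  set g : ℝ → ℝ := fun t => A * t ^ (p - q) - B * t ^ (r - q) with hg
  -- deriv Φ formula for positive t
  have hderiv : ∀ t : ℝ, 0 < t →
      deriv Φ t = t ^ (p-1) * A - t ^ (q-1) * C - t ^ (r-1) * B :=
    fun t ht => (hasDerivPhi hp0 hq0 hr0 ht).deriv
  -- deriv Φ t = t^(q-1) * (g t - C) for t > 0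
  have hfactor : ∀ t : ℝ, 0 < t → deriv Φ t = t ^ (q-1) * (g t - C) := by
    intro t ht
    rw [hderiv t ht, hg]
    have e1 : t ^ (p-1) = t ^ (q-1) * t ^ (p-q) := by
      rw [← Real.rpow_add ht]; ring_nf
    have e2 : t ^ (r-1) = t ^ (q-1) * t ^ (r-q) := by
      rw [← Real.rpow_add ht]; ring_nf
    rw [e1, e2]; ring
  -- g strictly monotone on Ici 0
  have hmono : StrictMonoOn g (Set.Ici 0) := by
    intro x hx y hy hxy
    have h1 : A * x ^ (p-q) < A * y ^ (p-q) :=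
      mul_lt_mul_of_pos_left (Real.rpow_lt_rpow hx hxy hpq) hA
    have h2 : (-B) * x ^ (r-q) ≤ (-B) * y ^ (r-q) :=
      mul_le_mul_of_nonneg_left (Real.rpow_le_rpow hx hxy.le hrq.le) (by linarith)
    simp only [hg]
    nlinarith
  have hg0 : g 0 = 0 := by
    simp [hg, Real.zero_rpow hpq.ne', Real.zero_rpow hrq.ne']
  -- continuity of g on Ici 0
  have hcont : ContinuousOn g (Set.Ici 0) := by
    apply ContinuousOn.sub
    · exact continuousOn_const.mul fun x hx =>
        (Real.continuousAt_rpow_const x _ (Or.inr hpq.le)).continuousWithinAt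
    · exact continuousOn_const.mul fun x hx =>
        (Real.continuousAt_rpow_const x _ (Or.inr hrq.le)).continuousWithinAt
  -- find M with C ≤ g M
  have htop : Tendsto (fun t : ℝ => A * t ^ (p-q)) atTop atTop :=
    (tendsto_rpow_atTop hpq).const_mul_atTop hA
  obtain ⟨M, hM⟩ := (htop.eventually_ge_atTop C).and (eventually_ge_atTop 1) |>.exists
  have hM1 : (1:ℝ) ≤ M := hM.2
  have hM0 : (0:ℝ) ≤ M := by linarith
  have hgM : C ≤ g M := by
    have : B * M ^ (r-q) ≤ 0 :=
      mul_nonpos_of_nonpos_of_nonneg hB (Real.rpow_nonneg hM0 _)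
    simp only [hg]; linarith [hM.1]
  -- IVT
  have hsub : Set.Icc (g 0) (g M) ⊆ g '' Set.Icc 0 M :=
    intermediate_value_Icc hM0 (hcont.mono (by intro x hx; exact hx.1))
  have hCmem : C ∈ Set.Icc (g 0) (g M) := ⟨by rw [hg0]; exact hC.le, hgM⟩
  obtain ⟨t₂, ht₂mem, ht₂⟩ := hsub hCmem
  have ht₂pos : 0 < t₂ := by
    rcases lt_or_eq_of_le ht₂mem.1 with h | h
    · exact h
    · exfalso; rw [← h, hg0] at ht₂; linarith
  refine ⟨t₂, ht₂pos, ?_, ?_, ?_⟩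
  · rw [hfactor t₂ ht₂pos, ht₂]; ring
  · intro t ht htz
    rw [hfactor t ht] at htz
    have hpow : (0:ℝ) < t ^ (q-1) := Real.rpow_pos_of_pos ht _
    have : g t = C := by
      rcases mul_eq_zero.mp htz with h | h
      · exact absurd h hpow.ne'
      · linarith
    exact hmono.injOn (Set.mem_Ici.mpr ht.le) (Set.mem_Ici.mpr ht₂pos.le)
      (by rw [this, ht₂])
  · -- second derivative
    have heq : deriv Φ =ᶠ[nhds t₂]
        (fun t => t ^ (p-1) * A - t ^ (q-1) * C - t ^ (r-1) * B) :=
      Filter.eventually_of_mem (Ioi_mem_nhds ht₂pos) fun x hx => hderiv x hx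
    rw [heq.deriv_eq, (hasDeriv2Phi (p := p) (q := q) (r := r) (A := A) (B := B) (C := C) ht₂pos).deriv]
    -- substitute C
    have hCval : C = A * t₂ ^ (p-q) - B * t₂ ^ (r-q) := ht₂.symm
    have e1 : t₂ ^ (q-1-1) * t₂ ^ (p-q) = t₂ ^ (p-1-1) := by
      rw [← Real.rpow_add ht₂pos]; ring_nf
    have e2 : t₂ ^ (q-1-1) * t₂ ^ (r-q) = t₂ ^ (r-1-1) := by
      rw [← Real.rpow_add ht₂pos]; ring_nf
    have key : (p-1) * t₂ ^ (p-1-1) * A - (q-1) * t₂ ^ (q-1-1) * C - (r-1) * t₂ ^ (r-1-1) * B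
        = (p-q) * A * t₂ ^ (p-1-1) - (r-q) * B * t₂ ^ (r-1-1) := by
      rw [hCval]
      linear_combination (-(q-1)*A)*e1 + ((q-1)*B)*e2
    rw [key]
    have h1 : 0 < (p-q) * A * t₂ ^ (p-1-1) := by
      have := Real.rpow_pos_of_pos ht₂pos (p-1-1); positivity
    have h2 : 0 ≤ -((r-q) * B * t₂ ^ (r-1-1)) := by
      have hpow := Real.rpow_nonneg ht₂pos.le (r-1-1)
      have h' : 0 ≤ (r-q) * (-B) * t₂ ^ (r-1-1) :=
        mul_nonneg (mul_nonneg hrq.le (neg_nonneg.mpr hB)) hpow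
      nlinarith [h']
    linarith
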